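/- arXiv:2005.11068 — 3 statements merged into one kernel-verified Lean document; each statement's English description precedes it below -/
import Mathlib

section
/- Fix a real number r ≥ 0, a unit vector direction with inner product c = ⟨ξ, ω⟩ ∈ [−1,1], a real momentum magnitude p ≥ 0, and a fixed real ρ. Then the limit as R → ∞ of (cosh(r/R) − c · sinh(r/R))^{−(ρ + i p R)} equals exp(i p c r). -/
open Complex Real Filter

theorem hyperbolic_plane_wave_euclidean_limit
    (r : ℝ) (hr : 0 ≤ r) (c : ℝ) (hc : c ∈ Set.Icc (-1 : ℝ) 1)
    (p : ℝ) (hp : 0 ≤ p) (ρ : ℝ) :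
    Filter.Tendsto
      (fun R : ℝ =>
        ((Real.cosh (r / R) - c * Real.sinh (r / R) : ℝ) : ℂ) ^
          (-(↑ρ + Complex.I * ↑p * ↑R)))
      Filter.atTop (nhds (Complex.exp (Complex.I * ↑p * ↑c * ↑r))) := by
  obtain ⟨hc1, hc2⟩ := hc
  have hpos : ∀ x : ℝ, 0 < Real.cosh x - c * Real.sinh x := by
    intro x
    nlinarith [Real.cosh_sq x, Real.cosh_pos x, sq_nonneg (Real.sinh x),
      sq_nonneg (Real.cosh x + c * Real.sinh x), sq_nonneg (Real.cosh x - Real.sinh x),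
      sq_nonneg (Real.cosh x + Real.sinh x)]
  rcases eq_or_lt_of_le hr with h0 | hr'
  · subst h0
    simp only [zero_div, Real.cosh_zero, Real.sinh_zero, mul_zero, sub_zero,
      Complex.ofReal_one, Complex.one_cpow, Complex.ofReal_zero]
    simpa using tendsto_const_nhds
  · set h : ℝ → ℝ := fun x => Real.log (Real.cosh x - c * Real.sinh x) with hh
    have h0val : h 0 = 0 := by simp [hh]
    have hd : HasDerivAt h (-c) 0 := by
      have hg : HasDerivAt (fun x => Real.cosh x - c * Real.sinh x) (-c) 0 := by
        have := (Real.hasDerivAt_cosh 0).sub ((Real.hasDerivAt_sinh 0).const_mul c)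
        exact this.congr_deriv (by simp)
      have := hg.log (by simpa using (hpos 0).ne')
      simpa using this
    have hto0 : Tendsto (fun R : ℝ => r / R) atTop (nhds 0) :=
      tendsto_const_nhds.div_atTop tendsto_id
    have hto : Tendsto (fun R : ℝ => r / R) atTop (nhdsWithin 0 {0}ᶜ) := by
      rw [tendsto_nhdsWithin_iff]
      refine ⟨hto0, (eventually_gt_atTop 0).mono fun R hR => ?_⟩
      simp [div_ne_zero hr'.ne' hR.ne']
    rw [hasDerivAt_iff_tendsto_slope] at hd
    have hs : Tendsto (fun R : ℝ => slope h 0 (r / R)) atTop (nhds (-c)) := hd.comp hto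
    have key : Tendsto (fun R : ℝ => R * h (r / R)) atTop (nhds (-(c * r))) := by
      have := hs.const_mul r
      rw [show r * -c = -(c * r) by ring] at this
      refine this.congr' ?_
      filter_upwards [eventually_gt_atTop 0] with R hR
      rw [slope_def_field, h0val]
      field_simp
      ring_nf
      rw [mul_comm r, mul_assoc, mul_inv_cancel₀ hr'.ne', mul_one]
    have hh0 : Tendsto (fun R : ℝ => h (r / R)) atTop (nhds 0) := by
      have := (hasDerivAt_iff_tendsto_slope.mpr hd).continuousAt.tendsto.comp hto0
      rw [h0val] at this
      exact this
    have T1 : Tendsto (fun R : ℝ => ((h (r / R) : ℝ) : ℂ)) atTop (nhds (0 : ℂ)) := by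
      exact_mod_cast (Complex.continuous_ofReal.tendsto 0).comp hh0
    have T2 : Tendsto (fun R : ℝ => ((R * h (r / R) : ℝ) : ℂ)) atTop
        (nhds ((-(c * r) : ℝ) : ℂ)) :=
      (Complex.continuous_ofReal.tendsto _).comp key
    have hexp : Tendsto
        (fun R : ℝ => (-(↑ρ + Complex.I * ↑p * ↑R)) * ((h (r / R) : ℝ) : ℂ))
        atTop (nhds (Complex.I * ↑p * ↑c * ↑r)) := by
      have := (T1.const_mul (-(ρ : ℂ))).add (T2.const_mul (-(Complex.I * ↑p)))
      have heq : (-(ρ : ℂ)) * (0 : ℂ) + (-(Complex.I * ↑p)) * ((-(c * r) : ℝ) : ℂ)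
          = Complex.I * ↑p * ↑c * ↑r := by push_cast; ring
      rw [heq] at this
      refine this.congr fun R => ?_
      push_cast
      ring
    refine ((Complex.continuous_exp.tendsto _).comp hexp).congr fun R => ?_
    simp only [Function.comp]
    rw [Complex.cpow_def_of_ne_zero (by exact_mod_cast (hpos (r / R)).ne'),
      ← Complex.ofReal_log (hpos (r / R)).le, mul_comm]
end

section
/- For complex a and real z with 0 ≤ z < 1, the identity (1/2)(1+√z)^{−2a} + (1/2)(1−√z)^{−2a} = ₂F₁(a, a+1/2; 1/2; z) holds. -/
open Complex
open Finset Filter Topology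

/-- The Gauss hypergeometric series ₂F₁(α,β;γ;z) = ∑ (α)ₙ(β)ₙ/((γ)ₙ n!) zⁿ. -/
noncomputable def hyp2F1 (α β γ z : ℂ) : ℂ :=
  ∑' n : ℕ,
    (∏ l ∈ Finset.range n, (α + l)) * (∏ l ∈ Finset.range n, (β + l)) /
      ((∏ l ∈ Finset.range n, (γ + l)) * (n.factorial : ℂ)) * z ^ n



noncomputable def bc (c : ℂ) (n : ℕ) : ℂ :=
  (∏ l ∈ Finset.range n, (c - l)) / n.factorial

noncomputable def bP (c : ℂ) (n : ℕ) : ℝ :=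
  (∏ l ∈ Finset.range n, (‖c‖ + 1 + l)) / n.factorial

lemma bP_pos (c : ℂ) (n : ℕ) : 0 < bP c n := by
  apply div_pos
  · exact Finset.prod_pos fun l _ => by positivity
  · exact_mod_cast n.factorial_pos

lemma bc_norm_le (c : ℂ) (n : ℕ) : ‖bc c n‖ ≤ bP c n := by
  unfold bc bP
  rw [norm_div, Complex.norm_natCast]
  have hf : (0:ℝ) < n.factorial := by exact_mod_cast n.factorial_pos
  rw [div_le_div_iff_of_pos_right hf]
  calc ‖∏ l ∈ Finset.range n, (c - l)‖ ≤ ∏ l ∈ Finset.range n, ‖c - (l:ℂ)‖ :=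
      norm_prod_le _ _
    _ ≤ ∏ l ∈ Finset.range n, (‖c‖ + 1 + l) := by
      apply Finset.prod_le_prod (fun l _ => norm_nonneg _)
      intro l _
      calc ‖c - (l:ℂ)‖ ≤ ‖c‖ + ‖(l:ℂ)‖ := norm_sub_le _ _
        _ = ‖c‖ + l := by rw [Complex.norm_natCast]
        _ ≤ ‖c‖ + 1 + l := by simp

lemma bP_succ (c : ℂ) (n : ℕ) : bP c (n+1) = bP c n * ((‖c‖ + 1 + n) / (n+1)) := by
  unfold bP
  rw [Finset.prod_range_succ, Nat.factorial_succ]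
  have h1 : ((n:ℝ)+1) ≠ 0 := by positivity
  have h2 : ((n.factorial : ℕ) : ℝ) ≠ 0 := Nat.cast_ne_zero.mpr n.factorial_ne_zero
  push_cast
  field_simp

lemma bc_succ (c : ℂ) (n : ℕ) : (n+1 : ℂ) * bc c (n+1) = (c - n) * bc c n := by
  unfold bc
  rw [Finset.prod_range_succ, Nat.factorial_succ]
  have h1 : ((n:ℂ)+1) ≠ 0 := by
    have : ((n+1 : ℕ) : ℂ) ≠ 0 := Nat.cast_ne_zero.mpr (Nat.succ_ne_zero n)
    push_cast at this; exact this
  have h2 : ((n.factorial : ℕ) : ℂ) ≠ 0 := Nat.cast_ne_zero.mpr n.factorial_ne_zero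
  push_cast
  field_simp

lemma summable_bP (c : ℂ) {b : ℝ} (hb0 : 0 < b) (hb1 : b < 1) :
    Summable (fun n => bP c n * (n+1) * b^n) := by
  set r : ℝ := (1+b)/2 with hr
  have hbr : b < r := by rw [hr]; linarith
  have hr1 : r < 1 := by rw [hr]; linarith
  apply summable_of_ratio_norm_eventually_le hr1
  have htend : Tendsto (fun n : ℕ => (1 + ‖c‖ * (1/(n+1))) * (1 + 1/(n+1)) * b)
      atTop (𝓝 ((1 + ‖c‖ * 0) * (1 + 0) * b)) := by
    apply Tendsto.mul_const
    exact (((tendsto_const_nhds).add ((tendsto_const_nhds).mul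
      tendsto_one_div_add_atTop_nhds_zero_nat)).mul
      ((tendsto_const_nhds).add tendsto_one_div_add_atTop_nhds_zero_nat))
  simp only [mul_zero, add_zero, one_mul] at htend
  have hev := htend.eventually_lt_const hbr
  filter_upwards [hev] with n hn
  have hn1 : (0:ℝ) < (n:ℝ) + 1 := by positivity
  have key : (1 + ‖c‖ * (1/((n:ℝ)+1))) * (1 + 1/((n:ℝ)+1))
      = (‖c‖ + 1 + n)/(n+1) * (((n:ℝ)+2)/(n+1)) := by
    have h : ((n:ℝ)+1) ≠ 0 := ne_of_gt hn1
    field_simp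
    ring
  rw [key] at hn
  have hPn := bP_pos c n
  have hPn1 := bP_pos c (n+1)
  have hcn : (0:ℝ) ≤ ‖c‖ + 1 + n := by positivity
  push_cast
  rw [Real.norm_eq_abs, Real.norm_eq_abs, abs_of_pos (by positivity), abs_of_pos (by positivity)]
  have hfact : bP c (n+1) * ((n:ℝ)+1+1) * b^(n+1)
      = (bP c n * ((n:ℝ)+1) * b^n) * ((‖c‖ + 1 + n)/(n+1) * (((n:ℝ)+2)/(n+1)) * b) := by
    rw [bP_succ]
    field_simp
    ring
  rw [hfact]
  have hpos : 0 < bP c n * ((n:ℝ)+1) * b^n := by positivity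
  calc bP c n * ((n:ℝ)+1) * b^n * ((‖c‖ + 1 + n)/(n+1) * (((n:ℝ)+2)/(n+1)) * b)
      ≤ bP c n * ((n:ℝ)+1) * b^n * r :=
        mul_le_mul_of_nonneg_left (le_of_lt hn) (le_of_lt hpos)
    _ = r * (bP c n * ((n:ℝ)+1) * b^n) := by ring

theorem hasSum_bin (c : ℂ) {x : ℝ} (hx : |x| < 1) :
    HasSum (fun n => bc c n * (x:ℂ)^n) (((1+x : ℝ) : ℂ) ^ c) := by
  set b : ℝ := (|x|+1)/2 with hb
  have hxb : |x| < b := by rw [hb]; linarith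
  have hb0 : 0 < b := by rw [hb]; positivity
  have hb1 : b < 1 := by rw [hb]; linarith
  set t : Set ℝ := Set.Ioo (-b) b with ht
  have hxt : x ∈ t := by
    constructor
    · linarith [neg_abs_le x]
    · linarith [le_abs_self x]
  have h0t : (0:ℝ) ∈ t := by constructor <;> simp [hb0]
  set g : ℕ → ℝ → ℂ := fun n y => bc c n * (y:ℂ)^n with hg_def
  set g' : ℕ → ℝ → ℂ := fun n y => bc c n * (n * (y:ℂ)^(n-1)) with hg'_def
  set u : ℕ → ℝ := fun n => bP c n * (n+1) * b^n / b with hu_def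
  have hu : Summable u := (summable_bP c hb0 hb1).div_const b
  have hderiv : ∀ n y, HasDerivAt (g n) (g' n y) y := fun n y =>
    ((hasDerivAt_pow n (y:ℂ)).comp_ofReal).const_mul (bc c n)
  have hbound : ∀ n y, y ∈ t → ‖g' n y‖ ≤ u n := by
    intro n y hy
    have hyb : |y| ≤ b := le_of_lt (abs_lt.mpr ⟨hy.1, hy.2⟩)
    have h1 : ‖g' n y‖ = ‖bc c n‖ * ((n:ℝ) * |y|^(n-1)) := by
      simp only [hg'_def, norm_mul, norm_pow, Complex.norm_natCast, Complex.norm_real,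
        Real.norm_eq_abs]
    have h2 : (n:ℝ) * |y|^(n-1) ≤ ((n:ℝ)+1) * b^n / b := by
      cases n with
      | zero =>
        norm_num
        positivity
      | succ m =>
        have hyp : |y|^m ≤ b^m := pow_le_pow_left₀ (abs_nonneg y) hyb m
        have hbm : (0:ℝ) ≤ b^m := by positivity
        simp only [Nat.succ_sub_one]
        have hb' : b^(m+1)/b = b^m := by
          rw [pow_succ]
          field_simp
        rw [mul_div_assoc, hb']
        push_cast
        nlinarith
    rw [h1]
    calc ‖bc c n‖ * ((n:ℝ) * |y|^(n-1)) ≤ bP c n * (((n:ℝ)+1) * b^n / b) := by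
          apply mul_le_mul (bc_norm_le c n) h2 ?_ (le_of_lt (bP_pos c n))
          have : (0:ℝ) ≤ |y|^(n-1) := by positivity
          positivity
      _ = u n := by rw [hu_def]; ring
  have hsum0 : Summable (fun n => g n 0) := by
    apply summable_of_ne_finset_zero (s := {0})
    intro n hn
    have hn0 : n ≠ 0 := by simpa using hn
    simp [hg_def, zero_pow hn0]
  have hS : ∀ y ∈ t, HasDerivAt (fun w => ∑' n, g n w) (∑' n, g' n y) y := by
    intro y hy
    exact hasDerivAt_tsum_of_isPreconnected hu isOpen_Ioo (convex_Ioo _ _).isPreconnected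
      (fun n w hw => hderiv n w) hbound h0t hsum0 hy
  -- summability at any point of t
  have hsumg : ∀ y ∈ t, Summable (fun n => g n y) := by
    intro y hy
    have hyb : |y| ≤ b := le_of_lt (abs_lt.mpr ⟨hy.1, hy.2⟩)
    apply Summable.of_norm_bounded (summable_bP c hb0 hb1)
    intro n
    have : ‖g n y‖ = ‖bc c n‖ * |y|^n := by
      simp only [hg_def, norm_mul, norm_pow, Complex.norm_real, Real.norm_eq_abs]
    rw [this]
    calc ‖bc c n‖ * |y|^n ≤ bP c n * b^n := by
          apply mul_le_mul (bc_norm_le c n) (pow_le_pow_left₀ (abs_nonneg y) hyb n)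
            (by positivity) (le_of_lt (bP_pos c n))
      _ ≤ bP c n * ((n:ℝ)+1) * b^n := by
          have h0 : (0:ℝ) ≤ (n:ℝ) := Nat.cast_nonneg n
          have hP := le_of_lt (bP_pos c n)
          have hbn : (0:ℝ) ≤ b^n := by positivity
          nlinarith [mul_nonneg (mul_nonneg hP hbn) h0]
  have hsumg' : ∀ y ∈ t, Summable (fun n => g' n y) := by
    intro y hy
    apply Summable.of_norm_bounded hu
    exact fun n => hbound n y hy
  -- the ODE
  have hODE : ∀ y ∈ t, (1 + (y:ℂ)) * (∑' n, g' n y) = c * (∑' n, g n y) := by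
    intro y hy
    have sg := hsumg y hy
    have sg' := hsumg' y hy
    have sg'1 : Summable (fun n => g' (n+1) y) := by
      rw [← summable_nat_add_iff 1] at sg'
      exact sg'
    have key : ∀ n, g' n y + (y:ℂ) * g' n y - c * g n y = g' n y - g' (n+1) y := by
      intro n
      have hrec := bc_succ c n
      simp only [hg_def, hg'_def, Nat.add_sub_cancel]
      cases n with
      | zero =>
        have h01 : bc c 1 = c * bc c 0 := by
          have h := bc_succ c 0
          push_cast at h
          simpa using h
        simp only [Nat.cast_zero, Nat.cast_one, pow_zero, zero_mul, mul_zero, h01]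
        ring
      | succ m =>
        have hrec2 := bc_succ c (m+1)
        simp only [Nat.add_sub_cancel]
        push_cast at hrec2 ⊢
        linear_combination ((y:ℂ))^(m+1) * hrec2
    have e1 : ∑' n, (g' n y + (y:ℂ)*g' n y - c*g n y)
        = (∑' n, g' n y) + (y:ℂ)*(∑' n, g' n y) - c*(∑' n, g n y) := by
      rw [Summable.tsum_sub (sg'.add (sg'.mul_left _)) (sg.mul_left _),
        Summable.tsum_add sg' (sg'.mul_left _), tsum_mul_left, tsum_mul_left]
    have e2 : ∑' n, (g' n y + (y:ℂ)*g' n y - c*g n y) = 0 := by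
      rw [tsum_congr key, Summable.tsum_sub sg' sg'1, Summable.tsum_eq_zero_add sg']
      simp [hg'_def]
    linear_combination e2 - e1
  -- positivity of 1 + y on t
  have hpos1 : ∀ y ∈ t, (0:ℝ) < 1 + y := by
    intro y hy
    have h1 := hy.1
    have : -(1:ℝ) < -b := by linarith
    linarith
  -- the exponential side
  have hE : ∀ y ∈ t, HasDerivAt (fun w : ℝ => Complex.exp (-c * (Real.log (1+w) : ℂ)))
      (Complex.exp (-c * (Real.log (1+y) : ℂ)) * (-c * (((1+y)⁻¹ : ℝ) : ℂ))) y := by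
    intro y hy
    have h1y : (1:ℝ)+y ≠ 0 := ne_of_gt (hpos1 y hy)
    have hlog : HasDerivAt (fun w : ℝ => Real.log (1+w)) ((1+y)⁻¹ * 1) y :=
      (Real.hasDerivAt_log h1y).comp y ((hasDerivAt_id y).const_add 1)
    have h2 := ((hlog.ofReal_comp).const_mul (-c)).cexp
    simpa [mul_one] using h2
  -- N has zero derivative on t
  set N : ℝ → ℂ := fun w => (∑' n, g n w) * Complex.exp (-c * (Real.log (1+w) : ℂ)) with hN_def
  have hN : ∀ y ∈ t, HasDerivAt N 0 y := by
    intro y hy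
    have h := (hS y hy).mul (hE y hy)
    have h1yC : (1:ℂ) + (y:ℂ) ≠ 0 := by
      have : ((1+y : ℝ) : ℂ) ≠ 0 := Complex.ofReal_ne_zero.mpr (ne_of_gt (hpos1 y hy))
      push_cast at this
      exact this
    have hODE' := hODE y hy
    refine h.congr_deriv ?_
    symm
    have hcast : (((1+y)⁻¹ : ℝ) : ℂ) = (1 + (y:ℂ))⁻¹ := by push_cast; ring
    rw [hcast]
    have hv : (1+(y:ℂ))⁻¹ * (1+(y:ℂ)) = 1 := inv_mul_cancel₀ h1yC
    linear_combination (-(Complex.exp (-c * (Real.log (1+y) : ℂ)) * (1+(y:ℂ))⁻¹)) * hODE'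
      + (∑' n, g' n y) * Complex.exp (-c * (Real.log (1+y) : ℂ)) * hv
  -- constancy: N x = N 0
  have hNx : N x = N 0 := by
    rcases le_total 0 x with h0x | hx0
    · have hsub : Set.Icc (0:ℝ) x ⊆ t := by
        intro w hw
        constructor
        · have : (0:ℝ) < b := hb0
          linarith [hw.1]
        · calc w ≤ x := hw.2
            _ ≤ |x| := le_abs_self x
            _ < b := hxb
      exact constant_of_has_deriv_right_zero
        (fun y hy => ((hN y (hsub hy)).continuousAt.continuousWithinAt))
        (fun y hy => (hN y (hsub (Set.mem_Icc_of_Ico hy))).hasDerivWithinAt)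
        x (Set.right_mem_Icc.mpr h0x)
    · have hsub : Set.Icc x (0:ℝ) ⊆ t := by
        intro w hw
        constructor
        · calc -b < -|x| := by linarith
            _ ≤ x := neg_abs_le x
            _ ≤ w := hw.1
        · have : (0:ℝ) < b := hb0
          linarith [hw.2]
      exact (constant_of_has_deriv_right_zero
        (fun y hy => ((hN y (hsub hy)).continuousAt.continuousWithinAt))
        (fun y hy => (hN y (hsub (Set.mem_Icc_of_Ico hy))).hasDerivWithinAt)
        0 (Set.right_mem_Icc.mpr hx0)).symm
  -- value at 0
  have hS0 : (∑' n, g n 0) = 1 := by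
    rw [tsum_eq_single 0]
    · simp [hg_def, bc]
    · intro n hn
      simp [hg_def, zero_pow hn]
  have hN0 : N 0 = 1 := by
    rw [hN_def]
    simp [hS0, Real.log_one]
  -- conclude the value of the sum
  have hpos1x : (0:ℝ) < 1 + x := hpos1 x hxt
  have hval : (∑' n, g n x) = ((1+x : ℝ) : ℂ) ^ c := by
    have hNx1 : (∑' n, g n x) * Complex.exp (-c * (Real.log (1+x) : ℂ)) = 1 := by
      rw [← hN0, ← hNx]
    have hexp : Complex.exp (-c * (Real.log (1+x) : ℂ))
        = (Complex.exp (c * (Real.log (1+x) : ℂ)))⁻¹ := by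
      rw [← Complex.exp_neg]
      ring_nf
    rw [hexp] at hNx1
    have hne : Complex.exp (c * (Real.log (1+x) : ℂ)) ≠ 0 := Complex.exp_ne_zero _
    have h1 : (∑' n, g n x) = Complex.exp (c * (Real.log (1+x) : ℂ)) := by
      field_simp at hNx1
      exact hNx1
    rw [h1, Complex.cpow_def_of_ne_zero (Complex.ofReal_ne_zero.mpr (ne_of_gt hpos1x)),
      ← Complex.ofReal_log (le_of_lt hpos1x), mul_comm]
  have := (hsumg x hxt).hasSum
  rw [hval] at this
  exact this

lemma prod_split (f : ℕ → ℂ) (k : ℕ) :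
    ∏ l ∈ Finset.range (2*k), f l
      = (∏ j ∈ Finset.range k, f (2*j)) * ∏ j ∈ Finset.range k, f (2*j+1) := by
  induction k with
  | zero => simp
  | succ m ih =>
    rw [show 2*(m+1) = 2*m+1+1 by ring, Finset.prod_range_succ, Finset.prod_range_succ, ih,
      Finset.prod_range_succ, Finset.prod_range_succ]
    ring

lemma bc_even (a : ℂ) (k : ℕ) :
    bc (-2*a) (2*k) = (∏ l ∈ Finset.range k, (a + l)) * (∏ l ∈ Finset.range k, (a + 1/2 + l)) /
      ((∏ l ∈ Finset.range k, ((1:ℂ)/2 + l)) * (k.factorial : ℂ)) := by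
  have num : ∏ l ∈ Finset.range (2*k), (-2*a - (l:ℂ))
      = 4^k * ((∏ l ∈ Finset.range k, (a + l)) * (∏ l ∈ Finset.range k, (a + 1/2 + l))) := by
    have e1 : ∀ l, (-2*a - (l:ℂ)) = (-1) * (2*a + l) := by intro l; ring
    calc ∏ l ∈ Finset.range (2*k), (-2*a - (l:ℂ))
        = ∏ l ∈ Finset.range (2*k), ((-1) * (2*a + l)) := by
          exact Finset.prod_congr rfl fun l _ => e1 l
      _ = (-1 : ℂ)^(2*k) * ∏ l ∈ Finset.range (2*k), (2*a + l) := by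
          rw [Finset.prod_mul_distrib, Finset.prod_const, Finset.card_range]
      _ = ∏ l ∈ Finset.range (2*k), (2*a + (l:ℂ)) := by
          rw [pow_mul, neg_one_sq, one_pow, one_mul]
      _ = (∏ j ∈ Finset.range k, (2*a + ((2*j : ℕ):ℂ)))
            * ∏ j ∈ Finset.range k, (2*a + ((2*j+1 : ℕ):ℂ)) := prod_split _ k
      _ = (∏ j ∈ Finset.range k, 2*(a + j)) * ∏ j ∈ Finset.range k, 2*(a + 1/2 + j) := by
          congr 1 <;> exact Finset.prod_congr rfl fun j _ => by push_cast; ring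
      _ = 4^k * ((∏ l ∈ Finset.range k, (a + l)) * (∏ l ∈ Finset.range k, (a + 1/2 + l))) := by
          rw [Finset.prod_mul_distrib, Finset.prod_mul_distrib, Finset.prod_const,
            Finset.card_range]
          rw [show (4:ℂ)^k = 2^k * 2^k by rw [← mul_pow]; norm_num]
          ring
  have den : (((2*k).factorial : ℕ) : ℂ)
      = 4^k * ((∏ l ∈ Finset.range k, ((1:ℂ)/2 + l)) * (k.factorial : ℂ)) := by
    have h1 : (((2*k).factorial : ℕ) : ℂ) = ∏ l ∈ Finset.range (2*k), ((l:ℂ) + 1) := by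
      rw [← Finset.prod_range_add_one_eq_factorial]
      push_cast
      rfl
    rw [h1, prod_split]
    have h2 : (k.factorial : ℂ) = ∏ l ∈ Finset.range k, ((l:ℂ) + 1) := by
      rw [← Finset.prod_range_add_one_eq_factorial]
      push_cast
      rfl
    rw [h2]
    calc (∏ j ∈ Finset.range k, (((2*j : ℕ):ℂ) + 1)) * ∏ j ∈ Finset.range k, (((2*j+1 : ℕ):ℂ) + 1)
        = (∏ j ∈ Finset.range k, 2*((1:ℂ)/2 + j)) * ∏ j ∈ Finset.range k, 2*((j:ℂ) + 1) := by
          congr 1 <;> exact Finset.prod_congr rfl fun j _ => by push_cast; ring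
      _ = 4^k * ((∏ l ∈ Finset.range k, ((1:ℂ)/2 + l)) * ∏ l ∈ Finset.range k, ((l:ℂ) + 1)) := by
          rw [Finset.prod_mul_distrib, Finset.prod_mul_distrib, Finset.prod_const,
            Finset.card_range]
          rw [show (4:ℂ)^k = 2^k * 2^k by rw [← mul_pow]; norm_num]
          ring
  unfold bc
  have e : ∀ l ∈ Finset.range (2*k), (-2*a - (l:ℂ)) = (-2*a - (l:ℂ)) := fun _ _ => rfl
  rw [show (∏ l ∈ Finset.range (2*k), (-2*a - (l:ℂ))) = ∏ l ∈ Finset.range (2*k), (-2*a - (l:ℂ)) from rfl] at num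
  have h4 : (4:ℂ)^k ≠ 0 := pow_ne_zero _ (by norm_num)
  rw [num, den]  -- bc's numerator is ∏ (−2a − l)? need to match
  rw [mul_div_mul_left _ _ h4]

theorem half_sum_powers_eq_hyp2F1 (a : ℂ) (z : ℝ) (hz0 : 0 ≤ z) (hz1 : z < 1) :
    (1 / 2) * ((1 + Real.sqrt z : ℝ) : ℂ) ^ (-2 * a) +
      (1 / 2) * ((1 - Real.sqrt z : ℝ) : ℂ) ^ (-2 * a) =
      hyp2F1 a (a + 1 / 2) (1 / 2) (z : ℂ) := by
  set c : ℂ := -2 * a with hc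
  set x : ℝ := Real.sqrt z with hxdef
  have hx0 : 0 ≤ x := Real.sqrt_nonneg z
  have hx1 : x < 1 := by
    rw [hxdef, show (1:ℝ) = Real.sqrt 1 by rw [Real.sqrt_one]]
    exact Real.sqrt_lt_sqrt hz0 hz1
  have hxabs : |x| < 1 := by rwa [_root_.abs_of_nonneg hx0]
  have hxabs' : |(-x)| < 1 := by rwa [abs_neg]
  have h1 := hasSum_bin c hxabs
  have h2 : HasSum (fun n => bc c n * ((-x : ℝ):ℂ)^n) (((1 - x : ℝ) : ℂ) ^ c) := by
    have := hasSum_bin c hxabs'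
    simpa [sub_eq_add_neg] using this
  have h3 : HasSum (fun n => (1/2 : ℂ) * (bc c n * (x:ℂ)^n) + (1/2 : ℂ) * (bc c n * ((-x : ℝ):ℂ)^n))
      ((1/2 : ℂ) * ((1 + x : ℝ):ℂ)^c + (1/2 : ℂ) * ((1 - x : ℝ):ℂ)^c) :=
    (h1.mul_left _).add (h2.mul_left _)
  set f : ℕ → ℂ := fun n => (1/2 : ℂ) * (bc c n * (x:ℂ)^n) + (1/2 : ℂ) * (bc c n * ((-x : ℝ):ℂ)^n)
    with hf_def
  have hinj : Function.Injective (fun k : ℕ => 2*k) := fun i j h => by simpa using h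
  have hvanish : ∀ n, n ∉ Set.range (fun k : ℕ => 2*k) → f n = 0 := by
    intro n hn
    have hodd : Odd n := by
      rcases Nat.even_or_odd n with he | ho
      · exfalso
        obtain ⟨r, hr⟩ := he
        exact hn ⟨r, by simp; omega⟩
      · exact ho
    have : ((-x : ℝ) : ℂ)^n = -((x:ℂ)^n) := by
      push_cast
      exact hodd.neg_pow _
    rw [hf_def]
    simp only [this]
    ring
  have h4 : HasSum (fun k => f (2*k))
      ((1/2 : ℂ) * ((1 + x : ℝ):ℂ)^c + (1/2 : ℂ) * ((1 - x : ℝ):ℂ)^c) :=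
    (Function.Injective.hasSum_iff hinj hvanish).mpr h3
  have hterm : ∀ k, f (2*k)
      = (∏ l ∈ Finset.range k, (a + l)) * (∏ l ∈ Finset.range k, (a + 1/2 + l)) /
        ((∏ l ∈ Finset.range k, ((1:ℂ)/2 + l)) * (k.factorial : ℂ)) * (z:ℂ)^k := by
    intro k
    have hxeven : ((-x : ℝ) : ℂ)^(2*k) = ((x : ℝ):ℂ)^(2*k) := by
      push_cast
      rw [pow_mul, pow_mul, neg_pow_two]
    have hx2 : ((x : ℝ):ℂ)^(2*k) = (z:ℂ)^k := by
      rw [pow_mul, ← Complex.ofReal_pow, hxdef, Real.sq_sqrt hz0]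
    calc f (2*k) = bc c (2*k) * ((x : ℝ):ℂ)^(2*k) := by
          rw [hf_def]
          simp only [hxeven]
          ring
      _ = _ := by rw [hx2, hc, bc_even]
  rw [show (fun k => f (2*k)) = (fun k =>
      (∏ l ∈ Finset.range k, (a + l)) * (∏ l ∈ Finset.range k, (a + 1/2 + l)) /
        ((∏ l ∈ Finset.range k, ((1:ℂ)/2 + l)) * (k.factorial : ℂ)) * (z:ℂ)^k)
    from funext hterm] at h4
  unfold hyp2F1
  exact h4.tsum_eq.symm
end

section
/- For ρ > 0, real λ, and real r > 0 with λ·r > 0 fixed as a product p·r_E, the limit as λ → ∞ and χ → 0 with λχ = p·r_E fixed of the function ₂F₁((ρ+iλ)/2, (ρ−iλ)/2; ρ+1/2; −sinh²χ), taken along χ = r_E p/λ, equals the normalized Bessel function 2^{ρ−1/2} Γ(ρ+1/2) (p r_E)^{−(ρ−1/2)} J_{ρ−1/2}(p r_E). -/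
set_option maxHeartbeats 1000000

open Complex Real Filter

open Topology

/-- The Bessel function of the first kind J_ν(x) for x > 0, via its power series. -/
noncomputable def besselJ (ν x : ℝ) : ℝ :=
  ∑' n : ℕ, (-1) ^ n / (n.factorial * Real.Gamma ((n : ℝ) + ν + 1)) *
    (x / 2) ^ ((2 * n : ℝ) + ν)

lemma gamma_prod (x : ℝ) (hx : 0 < x) (n : ℕ) :
    Real.Gamma (x + n) = Real.Gamma x * ∏ l ∈ Finset.range n, (x + l) := by
  induction n with
  | zero => simp
  | succ k ih =>
    have hxk : (0:ℝ) < x + k := by positivity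
    have h1 : (x + ((k:ℕ)+1 : ℕ) : ℝ) = (x + k) + 1 := by push_cast; ring
    rw [h1, Real.Gamma_add_one hxk.ne', ih, Finset.prod_range_succ]; ring


noncomputable def gAux (ρ rE p : ℝ) (lam : ℝ) (n : ℕ) : ℝ :=
  (-1)^n * (∏ l ∈ Finset.range n, ((ρ/2+l)^2 * Real.sinh (rE*p/lam)^2
      + (lam * Real.sinh (rE*p/lam))^2/4)) /
    ((∏ l ∈ Finset.range n, (ρ+1/2+l)) * n.factorial)

noncomputable def gLim (ρ c : ℝ) (n : ℕ) : ℝ :=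
  (-1)^n * (c^2/4)^n / ((∏ l ∈ Finset.range n, (ρ+1/2+l)) * n.factorial)

lemma choose_le_two_pow' (n k : ℕ) : n.choose k ≤ 2 ^ n := by
  rcases le_or_gt k n with h | h
  · calc n.choose k ≤ ∑ m ∈ Finset.range (n+1), n.choose m :=
        Finset.single_le_sum (fun i _ => Nat.zero_le _) (Finset.mem_range.2 (Nat.lt_succ_of_le h))
    _ = 2 ^ n := Nat.sum_range_choose n
  · simp [Nat.choose_eq_zero_of_lt h]

lemma prod_add_le (m n : ℕ) :
    (∏ l ∈ Finset.range n, (l + (m + 1))) ≤ 2 ^ (n + m) * n.factorial := by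
  have key : (∏ l ∈ Finset.range n, (l + (m + 1))) * m.factorial = (n + m).factorial := by
    induction n with
    | zero => simp
    | succ k ih =>
      rw [Finset.prod_range_succ, mul_right_comm, ih]
      have h : k + 1 + m = (k + m) + 1 := by omega
      rw [h, Nat.factorial_succ]; ring_nf
  have h2 : (n+m).factorial = (n+m).choose m * n.factorial * m.factorial := by
    rw [Nat.add_choose_mul_factorial_mul_factorial]
  have h3 : (∏ l ∈ Finset.range n, (l + (m + 1))) = (n+m).choose m * n.factorial :=
    Nat.eq_of_mul_eq_mul_right (Nat.factorial_pos m) (by rw [key, h2])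
  rw [h3]
  exact Nat.mul_le_mul_right _ (choose_le_two_pow' _ _)

lemma sinh_le_mul (x : ℝ) : Real.sinh x ≤ x * Real.exp x := by
  rw [Real.sinh_eq]
  have h1 : 1 - 2*x ≤ Real.exp (-(2*x)) := by
    have := Real.add_one_le_exp (-(2*x)); linarith
  have h3 : Real.exp x * (1 - 2*x) ≤ Real.exp x * Real.exp (-(2*x)) :=
    mul_le_mul_of_nonneg_left h1 (Real.exp_pos x).le
  have h2 : Real.exp (-x) = Real.exp x * Real.exp (-(2*x)) := by
    rw [← Real.exp_add]; ring_nf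
  nlinarith [Real.exp_pos x]

lemma tendsto_sinh_div (c : ℝ) (hc : 0 < c) :
    Tendsto (fun lam : ℝ => lam * Real.sinh (c / lam)) atTop (𝓝 c) := by
  have hslope : Tendsto (fun u : ℝ => Real.sinh u / u) (nhdsWithin 0 {0}ᶜ) (𝓝 1) := by
    have h := (Real.hasDerivAt_sinh 0)
    rw [hasDerivAt_iff_tendsto_slope] at h
    simpa [slope_fun_def, Real.cosh_zero, Real.sinh_zero, div_eq_inv_mul] using h
  have hu : Tendsto (fun lam : ℝ => c / lam) atTop (nhdsWithin 0 {0}ᶜ) := by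
    rw [tendsto_nhdsWithin_iff]
    refine ⟨tendsto_const_nhds.div_atTop tendsto_id, ?_⟩
    filter_upwards [eventually_gt_atTop (0:ℝ)] with lam hlam
    simp [div_ne_zero hc.ne' hlam.ne']
  have h1 : Tendsto (fun lam : ℝ => c * (Real.sinh (c / lam) / (c / lam))) atTop (𝓝 (c * 1)) :=
    (hslope.comp hu).const_mul c
  rw [mul_one] at h1
  refine h1.congr' ?_
  filter_upwards [eventually_gt_atTop (0:ℝ)] with lam hlam
  field_simp

lemma step3 (ρ p rE : ℝ) (hρ : 0 < ρ) (hp : 0 < p) (hr : 0 < rE) :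
    Tendsto (fun lam : ℝ => ∑' n, gAux ρ rE p lam n) atTop (𝓝 (∑' n, gLim ρ (p*rE) n)) := by
  have hc : (0:ℝ) < rE * p := mul_pos hr hp
  set c := rE * p with hcdef
  set e1 := Real.exp 1 with he1def
  have he1 : (1:ℝ) ≤ e1 := by
    have := Real.add_one_le_exp (1:ℝ); rw [he1def]; linarith
  set Λ : ℝ := 2 + c + 4 * e1 * c with hΛdef
  have hΛpos : 0 < Λ := by rw [hΛdef]; positivity
  have hΛ2 : 2 ≤ Λ := by rw [hΛdef]; nlinarith
  have hΛc : c ≤ Λ := by rw [hΛdef]; nlinarith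
  have hΛ4 : 4 * e1 * c ≤ Λ := by rw [hΛdef]; nlinarith
  set b : ℝ := e1 * c / Λ with hbdef
  have hbpos : 0 < b := by rw [hbdef]; positivity
  have hb4 : b ≤ 1/4 := by
    rw [hbdef, div_le_iff₀ hΛpos]; nlinarith
  set a : ℝ := ρ/2 + Λ/2 with hadef
  have hapos : 0 < a := by rw [hadef]; positivity
  set m : ℕ := ⌈a⌉₊ with hmdef
  have ham : a ≤ m := Nat.le_ceil a
  clear_value m a b Λ e1 c
  -- the dominating bound
  have hsum : Summable (fun n : ℕ => (4:ℝ)^m * (8*b^2)^n) := by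
    refine Summable.mul_left _ (summable_geometric_of_lt_one (by positivity) ?_)
    nlinarith
  refine tendsto_tsum_of_dominated_convergence hsum ?_ ?_
  · -- termwise limits
    intro n
    have hs0 : Tendsto (fun lam : ℝ => Real.sinh (c/lam)) atTop (𝓝 0) := by
      have h0 : Tendsto (fun lam : ℝ => c/lam) atTop (𝓝 0) :=
        tendsto_const_nhds.div_atTop tendsto_id
      simpa [Function.comp_def] using (Real.continuous_sinh.tendsto 0).comp h0
    have hls : Tendsto (fun lam : ℝ => lam * Real.sinh (c/lam)) atTop (𝓝 c) :=
      tendsto_sinh_div c hc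
    have hfac : ∀ l : ℕ, Tendsto (fun lam : ℝ =>
        (ρ/2+(l:ℝ))^2 * Real.sinh (c/lam)^2 + (lam * Real.sinh (c/lam))^2/4)
        atTop (𝓝 ((p*rE)^2/4)) := by
      intro l
      have t := (((hs0.mul hs0).const_mul ((ρ/2+(l:ℝ))^2)).add ((hls.mul hls).div_const 4))
      have hv : ((ρ/2+(l:ℝ))^2*(0*0) + c*c/4) = (p*rE)^2/4 := by rw [hcdef]; ring
      rw [hv] at t
      exact t.congr fun lam => by ring
    have hprod : Tendsto (fun lam : ℝ => ∏ l ∈ Finset.range n,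
        ((ρ/2+(l:ℝ))^2 * Real.sinh (c/lam)^2 + (lam * Real.sinh (c/lam))^2/4))
        atTop (𝓝 (∏ _l ∈ Finset.range n, ((p*rE)^2/4))) :=
      tendsto_finset_prod _ fun l _ => hfac l
    have := (hprod.const_mul ((-1:ℝ)^n)).div_const
      ((∏ l ∈ Finset.range n, (ρ+1/2+(l:ℝ))) * n.factorial)
    rw [Finset.prod_const, Finset.card_range] at this
    exact this.congr fun lam => by rw [gAux, ← hcdef]
  · -- uniform bound
    filter_upwards [eventually_ge_atTop Λ] with lam hlam
    intro n
    have hlampos : 0 < lam := lt_of_lt_of_le hΛpos hlam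
    set s := Real.sinh (c/lam) with hsdef
    have hs_nonneg : 0 ≤ s := Real.sinh_nonneg_iff.2 (by positivity)
    clear_value s
    have hxle : c/lam ≤ 1 := by
      rw [div_le_one hlampos]; linarith
    have hsle : s ≤ e1 * c / lam := by
      have h1 : s ≤ (c/lam) * Real.exp (c/lam) := hsdef ▸ sinh_le_mul _
      have h2 : Real.exp (c/lam) ≤ e1 := by
        rw [he1def]; exact Real.exp_le_exp.2 hxle
      calc s ≤ (c/lam) * Real.exp (c/lam) := h1
        _ ≤ (c/lam) * e1 := by
            exact mul_le_mul_of_nonneg_left h2 (by positivity)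
        _ = e1 * c / lam := by ring
    -- per-factor bound
    have hfacb : ∀ l ∈ Finset.range n,
        (ρ/2+(l:ℝ))^2 * s^2 + (lam * s)^2/4 ≤ b^2 * ((l:ℝ) + a)^2 := by
      intro l _
      have h1 : s^2 ≤ (e1*c/lam)^2 := by
        apply pow_le_pow_left₀ hs_nonneg hsle
      have h2 : (lam*s)^2 ≤ (e1*c)^2 := by
        have : (lam*s)^2 = lam^2 * s^2 := by ring
        rw [this]
        calc lam^2 * s^2 ≤ lam^2 * (e1*c/lam)^2 :=
              mul_le_mul_of_nonneg_left h1 (by positivity)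
          _ = (e1*c)^2 := by field_simp
      have h3 : e1*c/lam ≤ b := by
        rw [hbdef]
        exact div_le_div_of_nonneg_left (by positivity) hΛpos hlam
      have h4 : (e1*c/lam)^2 ≤ b^2 := pow_le_pow_left₀ (by positivity) h3 2
      have h5 : (e1*c)^2 = b^2 * Λ^2 := by
        rw [hbdef]; field_simp
      have h6 : (ρ/2+(l:ℝ))^2 * s^2 + (lam * s)^2/4
          ≤ (ρ/2+(l:ℝ))^2 * b^2 + b^2*Λ^2/4 := by
        have := mul_le_mul_of_nonneg_left (h1.trans h4) (sq_nonneg (ρ/2+(l:ℝ)))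
        linarith
      have h7 : (ρ/2+(l:ℝ))^2 * b^2 + b^2*Λ^2/4 ≤ b^2 * ((l:ℝ) + a)^2 := by
        rw [hadef]
        have hl : (0:ℝ) ≤ l := Nat.cast_nonneg l
        nlinarith [sq_nonneg b, mul_nonneg (mul_nonneg (sq_nonneg b) (by positivity : (0:ℝ) ≤ ρ/2 + l)) hΛpos.le]
      linarith
    have hD : (n.factorial : ℝ) / 2^n ≤ ∏ l ∈ Finset.range n, (ρ+1/2+(l:ℝ)) := by
      have h1 : ∏ l ∈ Finset.range n, (((l:ℝ)+1)/2) ≤ ∏ l ∈ Finset.range n, (ρ+1/2+(l:ℝ)) := by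
        refine Finset.prod_le_prod (fun l _ => by positivity) (fun l _ => by linarith [Nat.cast_nonneg (α := ℝ) l])
      calc (n.factorial : ℝ) / 2^n = ∏ l ∈ Finset.range n, (((l:ℝ)+1)/2) := by
            rw [Finset.prod_div_distrib, Finset.prod_const, Finset.card_range]
            congr 1
            exact_mod_cast (Finset.prod_range_add_one_eq_factorial n).symm
        _ ≤ _ := h1
    have hprodle : ∏ l ∈ Finset.range n,
        ((ρ/2+(l:ℝ))^2 * s^2 + (lam * s)^2/4) ≤ (b^2)^n * ((2:ℝ)^(n+m) * n.factorial)^2 := by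
      calc ∏ l ∈ Finset.range n, ((ρ/2+(l:ℝ))^2 * s^2 + (lam * s)^2/4)
          ≤ ∏ l ∈ Finset.range n, (b^2 * ((l:ℝ) + a)^2) :=
            Finset.prod_le_prod (fun l _ => by positivity) hfacb
        _ = (b^2)^n * (∏ l ∈ Finset.range n, ((l:ℝ) + a))^2 := by
            rw [Finset.prod_mul_distrib, Finset.prod_const, Finset.card_range, ← Finset.prod_pow]
        _ ≤ (b^2)^n * ((2:ℝ)^(n+m) * n.factorial)^2 := by
            have hle : ∏ l ∈ Finset.range n, ((l:ℝ) + a) ≤ (2:ℝ)^(n+m) * n.factorial := by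
              calc ∏ l ∈ Finset.range n, ((l:ℝ) + a)
                  ≤ ∏ l ∈ Finset.range n, ((l:ℝ) + (m+1)) := by
                    refine Finset.prod_le_prod (fun l _ => by positivity) (fun l _ => ?_)
                    linarith [ham]
                _ = ((∏ l ∈ Finset.range n, (l + (m+1)) : ℕ) : ℝ) := by
                    push_cast
                    exact Finset.prod_congr rfl fun l _ => by ring
                _ ≤ (((2:ℕ)^(n+m) * n.factorial : ℕ) : ℝ) := by
                    exact_mod_cast Nat.cast_le.2 (prod_add_le m n)
                _ = (2:ℝ)^(n+m) * n.factorial := by push_cast; ring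
            have hnn : (0:ℝ) ≤ ∏ l ∈ Finset.range n, ((l:ℝ) + a) :=
              Finset.prod_nonneg fun l _ => by positivity
            exact mul_le_mul_of_nonneg_left (pow_le_pow_left₀ hnn hle 2) (by positivity)
    -- assemble
    have hDpos : (0:ℝ) < (∏ l ∈ Finset.range n, (ρ+1/2+(l:ℝ))) * n.factorial := by
      apply mul_pos (Finset.prod_pos fun l _ => by positivity)
      exact_mod_cast n.factorial_pos
    have habs : ‖gAux ρ rE p lam n‖ = (∏ l ∈ Finset.range n,
        ((ρ/2+(l:ℝ))^2 * s^2 + (lam * s)^2/4)) /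
        ((∏ l ∈ Finset.range n, (ρ+1/2+(l:ℝ))) * n.factorial) := by
      have hN : (0:ℝ) ≤ ∏ l ∈ Finset.range n,
          ((ρ/2+(l:ℝ))^2 * s^2 + (lam * s)^2/4) :=
        Finset.prod_nonneg fun l _ => by positivity
      rw [gAux, Real.norm_eq_abs, ← hcdef, ← hsdef, abs_div, abs_mul, _root_.abs_pow,
        abs_neg, abs_one, one_pow, one_mul, _root_.abs_of_nonneg hN, _root_.abs_of_pos hDpos]
    rw [habs]
    have hfapos : (0:ℝ) < (n.factorial:ℝ) := by exact_mod_cast n.factorial_pos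
    calc (∏ l ∈ Finset.range n, ((ρ/2+(l:ℝ))^2 * s^2 + (lam * s)^2/4)) /
          ((∏ l ∈ Finset.range n, (ρ+1/2+(l:ℝ))) * n.factorial)
        ≤ ((b^2)^n * ((2:ℝ)^(n+m) * n.factorial)^2) / (((n.factorial:ℝ)/2^n) * n.factorial) := by
          apply div_le_div₀ (by positivity) hprodle (by positivity)
          exact mul_le_mul_of_nonneg_right hD hfapos.le
      _ = (4:ℝ)^m * (8*b^2)^n := by
          have h8 : (8:ℝ)^n = 2^(n*3) := by rw [mul_comm n 3, pow_mul]; norm_num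
          have h4 : (4:ℝ)^m = 2^(m*2) := by rw [mul_comm m 2, pow_mul]; norm_num
          rw [show ((8:ℝ)*b^2)^n = 8^n*(b^2)^n from mul_pow _ _ n, h8, h4, pow_add]
          field_simp
          ring


lemma step1 (ρ rE p lam : ℝ) :
    hyp2F1 ((↑ρ + Complex.I * ↑lam) / 2) ((↑ρ - Complex.I * ↑lam) / 2) (↑ρ + 1 / 2)
      (-(Real.sinh (rE * p / lam)) ^ 2) = ((∑' n, gAux ρ rE p lam n : ℝ) : ℂ) := by
  rw [hyp2F1, Complex.ofReal_tsum]
  refine tsum_congr fun n => ?_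
  set s := Real.sinh (rE * p / lam) with hs
  have hP : (∏ l ∈ Finset.range n, ((↑ρ + Complex.I * ↑lam) / 2 + (l:ℂ))) *
      (∏ l ∈ Finset.range n, ((↑ρ - Complex.I * ↑lam) / 2 + (l:ℂ))) =
      ((∏ l ∈ Finset.range n, ((ρ/2 + l)^2 + (lam/2)^2) : ℝ) : ℂ) := by
    rw [← Finset.prod_mul_distrib, Complex.ofReal_prod]
    refine Finset.prod_congr rfl fun l _ => ?_
    push_cast
    linear_combination (-(lam:ℂ)^2/4) * Complex.I_sq
  have hγ : (∏ l ∈ Finset.range n, ((↑ρ + 1/2 : ℂ) + (l:ℂ))) =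
      ((∏ l ∈ Finset.range n, (ρ + 1/2 + l) : ℝ) : ℂ) := by
    rw [Complex.ofReal_prod]; exact Finset.prod_congr rfl fun l _ => by push_cast; ring
  rw [hP, hγ, gAux]
  have hnum : (∏ l ∈ Finset.range n, ((ρ/2+l)^2 * s^2 + (lam * s)^2/4))
      = (∏ l ∈ Finset.range n, ((ρ/2 + l)^2 + (lam/2)^2)) * (s^2)^n := by
    rw [Finset.prod_congr rfl (fun l _ => by ring :
        ∀ l ∈ Finset.range n, (ρ/2+(l:ℝ))^2 * s^2 + (lam * s)^2/4
          = ((ρ/2 + l)^2 + (lam/2)^2) * s^2),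
      Finset.prod_mul_distrib, Finset.prod_const, Finset.card_range]
  rw [hnum]
  push_cast
  ring


lemma step2 (ρ p rE : ℝ) (hρ : 0 < ρ) (hp : 0 < p) (hr : 0 < rE) :
    (2 ^ (ρ - 1/2) * Real.Gamma (ρ + 1/2) * (p * rE) ^ (-(ρ - 1/2)) *
      besselJ (ρ - 1/2) (p * rE)) = ∑' n, gLim ρ (p * rE) n := by
  rw [besselJ, ← tsum_mul_left]
  refine tsum_congr fun n => ?_
  have hx : (0:ℝ) < p * rE := mul_pos hp hr
  set x := p * rE with hxdef
  have hG : Real.Gamma ((n:ℝ) + (ρ - 1/2) + 1)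
      = Real.Gamma (ρ + 1/2) * ∏ l ∈ Finset.range n, (ρ + 1/2 + l) := by
    rw [show ((n:ℝ) + (ρ - 1/2) + 1) = (ρ + 1/2) + n by ring]
    exact gamma_prod _ (by linarith) n
  have hpow : (x/2) ^ ((2 * n : ℝ) + (ρ - 1/2))
      = (x^2/4)^n * (x ^ (ρ-1/2) / 2 ^ (ρ-1/2)) := by
    rw [Real.rpow_add (by positivity)]
    congr 1
    · rw [show ((2 * n : ℝ)) = ((2*n : ℕ) : ℝ) by push_cast; ring, Real.rpow_natCast,
        pow_mul]
      norm_num [div_pow]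
    · rw [Real.div_rpow hx.le (by norm_num)]
  rw [hG, hpow, gLim, Real.rpow_neg hx.le]
  have h1 : Real.Gamma (ρ + 1/2) ≠ 0 := (Real.Gamma_pos_of_pos (by linarith)).ne'
  have h2 : (∏ l ∈ Finset.range n, (ρ + 1/2 + (l:ℝ))) ≠ 0 :=
    (Finset.prod_pos fun l _ => by positivity).ne'
  have h3 : ((n.factorial : ℝ)) ≠ 0 := Nat.cast_ne_zero.2 n.factorial_ne_zero
  have h4 : (2:ℝ) ^ (ρ-1/2) ≠ 0 := (Real.rpow_pos_of_pos (by norm_num) _).ne'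
  have h5 : x ^ (ρ-1/2) ≠ 0 := (Real.rpow_pos_of_pos hx _).ne'
  field_simp


theorem spherical_function_bessel_limit (ρ p rE : ℝ) (hρ : 0 < ρ) (hp : 0 < p)
    (hr : 0 < rE) :
    Filter.Tendsto
      (fun lam : ℝ =>
        hyp2F1 ((↑ρ + Complex.I * ↑lam) / 2) ((↑ρ - Complex.I * ↑lam) / 2) (↑ρ + 1 / 2)
          (-(Real.sinh (rE * p / lam)) ^ 2))
      Filter.atTop
      (nhds ((2 ^ (ρ - 1 / 2) * Real.Gamma (ρ + 1 / 2) * (p * rE) ^ (-(ρ - 1 / 2)) *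
        besselJ (ρ - 1 / 2) (p * rE) : ℝ) : ℂ)) := by
  have hfun : (fun lam : ℝ =>
      hyp2F1 ((↑ρ + Complex.I * ↑lam) / 2) ((↑ρ - Complex.I * ↑lam) / 2) (↑ρ + 1 / 2)
        (-(Real.sinh (rE * p / lam)) ^ 2))
      = fun lam : ℝ => ((∑' n, gAux ρ rE p lam n : ℝ) : ℂ) :=
    funext fun lam => step1 ρ rE p lam
  rw [hfun, step2 ρ p rE hρ hp hr]
  exact (Complex.continuous_ofReal.tendsto _).comp (step3 ρ p rE hρ hp hr)
end
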